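/- Let m be odd and let Γ < U(2) be the group of order 2m consisting of the scalars ω^{4j} and the matrices ω^{4j+1}·b for 0 ≤ j ≤ m−1, where ω is a primitive 4m-th root of unity and b=[[0,1],[-1,0]]. Then Γ contains exactly one pseudoreflection, and it has order 2. -/

import Mathlib

open Matrix

noncomputable def bMat : Matrix (Fin 2) (Fin 2) ℂ := !![0, 1; -1, 0]

/-- A pseudoreflection in U(2): a non-identity matrix fixing a complex line pointwise. -/
def IsPseudoreflection (M : Matrix (Fin 2) (Fin 2) ℂ) : Prop := (M - 1).rank = 1

lemma smul_b_sub_one (lam : ℂ) : lam • bMat - 1 = !![-1, lam; -lam, -1] := by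
  ext i j
  fin_cases i <;> fin_cases j <;> simp [bMat, Matrix.one_apply]

lemma rank_smul_b (lam : ℂ) (h : lam ^ 2 = -1) : IsPseudoreflection (lam • bMat) := by
  unfold IsPseudoreflection
  rw [smul_b_sub_one, Matrix.rank_eq_finrank_span_cols]
  set A : Matrix (Fin 2) (Fin 2) ℂ := !![-1, lam; -lam, -1] with hA
  have hr : Set.range Aᵀ = {Aᵀ 0, Aᵀ 1} := by
    ext v
    simp [Set.range, Fin.exists_fin_two, eq_comm]
  have hc0 : Aᵀ 0 = ![(-1 : ℂ), -lam] := by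
    funext k; fin_cases k <;> simp [hA]
  have hc1 : Aᵀ 1 = ![lam, (-1 : ℂ)] := by
    funext k; fin_cases k <;> simp [hA]
  have hmem : Aᵀ 1 ∈ Submodule.span ℂ {Aᵀ 0} := by
    rw [Submodule.mem_span_singleton, hc0, hc1]
    refine ⟨-lam, ?_⟩
    funext k
    fin_cases k
    · show (-lam) * (-1) = lam; ring
    · show (-lam) * (-lam) = -1; rw [neg_mul_neg, ← sq, h]
  have hspan : Submodule.span ℂ (Set.range Aᵀ) = Submodule.span ℂ {Aᵀ 0} := by
    rw [hr, Set.pair_comm, Submodule.span_insert_eq_span hmem]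
  rw [show A.col = Aᵀ from rfl, hspan]
  exact finrank_span_singleton (by
    intro h0
    have := congrFun h0 0
    simp [hA] at this)

lemma sq_eq_neg_one_of_pr (lam : ℂ) (h : IsPseudoreflection (lam • bMat)) :
    lam ^ 2 = -1 := by
  by_contra hne
  unfold IsPseudoreflection at h
  have hdet : (lam • bMat - 1).det ≠ 0 := by
    rw [smul_b_sub_one, Matrix.det_fin_two_of]
    intro h0
    exact hne (by linear_combination h0)
  have h2 := Matrix.rank_of_isUnit _ ((Matrix.isUnit_iff_isUnit_det _).2
    (isUnit_iff_ne_zero.2 hdet))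
  rw [h] at h2
  simp at h2

lemma scalar_not_pr (c : ℂ) : ¬ IsPseudoreflection (c • (1 : Matrix (Fin 2) (Fin 2) ℂ)) := by
  intro h
  unfold IsPseudoreflection at h
  have heq : c • (1 : Matrix (Fin 2) (Fin 2) ℂ) - 1 = (c - 1) • 1 := by
    rw [sub_smul, one_smul]
  rw [heq] at h
  by_cases hc : c = 1
  · subst hc
    simp [Matrix.rank_zero] at h
  · have hdet : ((c - 1) • (1 : Matrix (Fin 2) (Fin 2) ℂ)).det ≠ 0 := by
      rw [Matrix.det_smul, Matrix.det_one]
      simp [Fintype.card_fin, pow_eq_zero_iff, sub_eq_zero, hc]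
    have h2 := Matrix.rank_of_isUnit _ ((Matrix.isUnit_iff_isUnit_det _).2
      (isUnit_iff_ne_zero.2 hdet))
    rw [h] at h2
    simp at h2

lemma bMat_sq : bMat * bMat = -1 := by
  ext i j
  fin_cases i <;> fin_cases j <;>
    simp [bMat, Matrix.mul_apply, Fin.sum_univ_two, Matrix.one_apply]

lemma order_two_of_pr (lam : ℂ) (h : lam ^ 2 = -1) : orderOf (lam • bMat) = 2 := by
  haveI : Fact (Nat.Prime 2) := ⟨Nat.prime_two⟩
  apply orderOf_eq_prime
  · rw [sq, Algebra.smul_mul_assoc, Matrix.mul_smul, bMat_sq, smul_smul, ← sq, h]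
    simp
  · intro heq
    have := congrFun (congrFun heq 0) 0
    simp [bMat, Matrix.one_apply] at this

theorem stmt_16 (m : ℕ) (hm : 0 < m) (hodd : Odd m) (ω : ℂ)
    (hω : IsPrimitiveRoot ω (4 * m))
    (Γ : Set (Matrix (Fin 2) (Fin 2) ℂ))
    (hΓ : Γ = {M | (∃ j < m, M = ω ^ (4 * j) • (1 : Matrix (Fin 2) (Fin 2) ℂ)) ∨
      (∃ j < m, M = ω ^ (4 * j + 1) • bMat)}) :
    (∃! u : Matrix (Fin 2) (Fin 2) ℂ, u ∈ Γ ∧ IsPseudoreflection u) ∧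
    (∀ u ∈ Γ, IsPseudoreflection u → orderOf u = 2) := by
  have hord : orderOf ω = 4 * m := hω.eq_orderOf.symm
  -- ω^(2m) = -1
  have h2m : ω ^ (2 * m) = -1 := by
    have h1 : (ω ^ (2 * m)) ^ 2 = 1 := by
      rw [← pow_mul]
      have : 2 * m * 2 = 4 * m := by ring
      rw [this, hω.pow_eq_one]
    have hne : ω ^ (2 * m) ≠ 1 := by
      apply hω.pow_ne_one_of_pos_of_lt <;> omega
    have h0 : (ω ^ (2 * m) - 1) * (ω ^ (2 * m) + 1) = 0 := by linear_combination h1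
    rcases mul_eq_zero.1 h0 with h | h
    · exact absurd (sub_eq_zero.1 h) hne
    · exact eq_neg_of_add_eq_zero_left h
  -- injectivity of j ↦ ω^(8j+2)
  have key : ∀ j j', j < m → j' < m → ω ^ (8 * j + 2) = ω ^ (8 * j' + 2) → j = j' := by
    have base : ∀ j j', j' ≤ j → j < m → j' < m →
        ω ^ (8 * j + 2) = ω ^ (8 * j' + 2) → j = j' := by
      intro j j' hle hj hj' heq
      have hmod : (8 * j + 2) % (4 * m) = (8 * j' + 2) % (4 * m) := by
        have e1 : ω ^ ((8 * j + 2) % (4 * m)) = ω ^ ((8 * j' + 2) % (4 * m)) := by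
          rw [← hord, pow_mod_orderOf, pow_mod_orderOf]; exact heq
        exact hω.pow_inj (Nat.mod_lt _ (by omega)) (Nat.mod_lt _ (by omega)) e1
      have hdvd : (4 * m) ∣ (8 * j + 2) - (8 * j' + 2) :=
        (Nat.modEq_iff_dvd' (by omega)).1 hmod.symm
      have hdvd2 : m ∣ (j - j') * 2 := by
        have he : (8 * j + 2) - (8 * j' + 2) = 4 * ((j - j') * 2) := by omega
        rw [he] at hdvd
        exact (Nat.mul_dvd_mul_iff_left (by norm_num : 0 < 4)).1 hdvd
      have hco : Nat.Coprime m 2 := hodd.coprime_two_right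
      have hdvd3 := (Nat.Coprime.dvd_of_dvd_mul_right hco) hdvd2
      have h0 := Nat.eq_zero_of_dvd_of_lt hdvd3 (by omega)
      omega
    intro j j' hj hj' heq
    rcases le_total j' j with h | h
    · exact base j j' h hj hj' heq
    · exact (base j' j h hj' hj heq.symm).symm
  -- existence of j₀
  have hm4 : m % 4 = 1 ∨ m % 4 = 3 := by
    rcases hodd with ⟨k, hk⟩; omega
  obtain ⟨j₀, hj₀m, hj₀⟩ : ∃ j₀, j₀ < m ∧ ω ^ (8 * j₀ + 2) = -1 := by
    rcases hm4 with h4 | h4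
    · refine ⟨(m - 1) / 4, by omega, ?_⟩
      have : 8 * ((m - 1) / 4) + 2 = 2 * m := by omega
      rw [this, h2m]
    · refine ⟨(3 * m - 1) / 4, by omega, ?_⟩
      have : 8 * ((3 * m - 1) / 4) + 2 = 4 * m + 2 * m := by omega
      rw [this, pow_add, hω.pow_eq_one, one_mul, h2m]
  have hsq : (ω ^ (4 * j₀ + 1)) ^ 2 = -1 := by
    rw [← pow_mul]
    have : (4 * j₀ + 1) * 2 = 8 * j₀ + 2 := by ring
    rw [this, hj₀]
  set u : Matrix (Fin 2) (Fin 2) ℂ := ω ^ (4 * j₀ + 1) • bMat with hu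
  constructor
  · refine ⟨u, ⟨by rw [hΓ]; exact Or.inr ⟨j₀, hj₀m, rfl⟩, rank_smul_b _ hsq⟩, ?_⟩
    rintro v ⟨hvΓ, hvpr⟩
    rw [hΓ] at hvΓ
    rcases hvΓ with ⟨j, hj, rfl⟩ | ⟨j, hj, rfl⟩
    · exact absurd hvpr (scalar_not_pr _)
    · have hsq' := sq_eq_neg_one_of_pr _ hvpr
      rw [← pow_mul] at hsq'
      have e : (4 * j + 1) * 2 = 8 * j + 2 := by ring
      rw [e] at hsq'
      have : j = j₀ := key j j₀ hj hj₀m (by rw [hsq', hj₀])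
      rw [this]
  · intro v hvΓ hvpr
    rw [hΓ] at hvΓ
    rcases hvΓ with ⟨j, hj, rfl⟩ | ⟨j, hj, rfl⟩
    · exact absurd hvpr (scalar_not_pr _)
    · have hsq' := sq_eq_neg_one_of_pr _ hvpr
      exact order_two_of_pr _ hsq'
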